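/- Let w be metric weights on a finite set 𝒩 of N points, let e_1,…,e_k be a greedy sequence of k edges on 𝒩, let M denote the matching {e_1,…,e_k}, and let M* be any matching on 𝒩 with k* edges. Write α = 2k/N and α* = 2k*/N. Then: (1) if α + α* < 1, then w(M*) ≤ max(2, 2α*/α)·w(M); and (2) if α + α* ≥ 1, then w(M*) ≤ max(2, (α*+1)/α − 1)·w(M). Equivalently, in case (1) w(M*) ≤ max(2, 2k*/k)·w(M), and in case (2) w(M*) ≤ max(2, (2k* + N)/(2k) − 1)·w(M). -/

import Mathlib

set_option maxHeartbeats 1000000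


/-- A matching given as a list of `k` edges: each edge has distinct endpoints and
different edges are vertex-disjoint. -/
def IsMatching {V : Type*} {k : ℕ} (f : Fin k → V × V) : Prop :=
  (∀ i, (f i).1 ≠ (f i).2) ∧
  ∀ i j, i ≠ j →
    (f i).1 ≠ (f j).1 ∧ (f i).1 ≠ (f j).2 ∧ (f i).2 ≠ (f j).1 ∧ (f i).2 ≠ (f j).2

/-- The weight of a matching: the sum of the weights of its edges. -/
def mWeight {V : Type*} {k : ℕ} (w : V → V → ℝ) (f : Fin k → V × V) : ℝ :=
  ∑ i, w (f i).1 (f i).2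

/-- A greedy sequence of `k` edges: a matching such that each edge `f i` is undominated
among the points not covered by the earlier edges, i.e. `w (f i) ≥ w (x,y)` for every
edge `(x,y)` on the remaining points sharing an endpoint with `f i`. -/
def IsGreedySeq {V : Type*} {k : ℕ} (w : V → V → ℝ) (f : Fin k → V × V) : Prop :=
  IsMatching f ∧
  ∀ i : Fin k, ∀ x y : V, x ≠ y →
    (∀ j, j < i → x ≠ (f j).1 ∧ x ≠ (f j).2) →
    (∀ j, j < i → y ≠ (f j).1 ∧ y ≠ (f j).2) →
    (x = (f i).1 ∨ x = (f i).2 ∨ y = (f i).1 ∨ y = (f i).2) →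
    w x y ≤ w (f i).1 (f i).2

/-- performance of the greedy `k`-matching against an optimal `k*`-matching,
with `α = 2k/N` and `α* = 2k*/N`:
if `α + α* < 1` then `w(M*) ≤ max 2 (2α*/α) · w(M)`, and
if `α + α* ≥ 1` then `w(M*) ≤ max 2 ((α*+1)/α − 1) · w(M)`. -/
lemma key {N : ℕ} (w : Fin N → Fin N → ℝ)
    (hnonneg : ∀ x y, 0 ≤ w x y)
    (hmetric : ∀ x y z : Fin N, x ≠ y → y ≠ z → x ≠ z → w x y ≤ w x z + w z y)
    {k kstar : ℕ} (hk : 1 ≤ k)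
    (f : Fin k → Fin N × Fin N) (hf : IsGreedySeq w f)
    (g : Fin kstar → Fin N × Fin N) (hg : IsMatching g) :
    ∃ F : ℕ, F ≤ kstar ∧ 2 * F + 2 * k ≤ N ∧
      ∀ t : ℝ, 2 ≤ t → (kstar : ℝ) + F ≤ t * k →
        mWeight w g ≤ t * mWeight w f := by
  classical
  set P : Fin kstar → Fin k → Prop := fun j i =>
    (g j).1 = (f i).1 ∨ (g j).1 = (f i).2 ∨ (g j).2 = (f i).1 ∨ (g j).2 = (f i).2 with hPdef
  set Fr : Finset (Fin kstar) := Finset.univ.filter (fun j => ∀ i, ¬ P j i) with hFrdef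
  -- uncovered-before facts for greedy endpoints
  have hfunc1 : ∀ i : Fin k, ∀ j : Fin k, j < i → (f i).1 ≠ (f j).1 ∧ (f i).1 ≠ (f j).2 := by
    intro i j hj
    have h := hf.1.2 i j (ne_of_gt hj)
    exact ⟨h.1, h.2.1⟩
  have hfunc2 : ∀ i : Fin k, ∀ j : Fin k, j < i → (f i).2 ≠ (f j).1 ∧ (f i).2 ≠ (f j).2 := by
    intro i j hj
    have h := hf.1.2 i j (ne_of_gt hj)
    exact ⟨h.2.2.1, h.2.2.2⟩
  -- the first greedy edge touched by g j (junk value for free j)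
  set ch : Fin kstar → Fin k := fun j =>
    if h : (Finset.univ.filter (fun i => P j i)).Nonempty
    then (Finset.univ.filter (fun i => P j i)).min' h
    else ⟨0, hk⟩ with hchdef
  have hmemFr : ∀ j, j ∈ Fr ↔ ∀ i, ¬ P j i := by
    intro j; simp [hFrdef]
  have hnefil : ∀ j, j ∉ Fr → (Finset.univ.filter (fun i => P j i)).Nonempty := by
    intro j hj
    rw [hmemFr] at hj
    push_neg at hj
    obtain ⟨i, hi⟩ := hj
    exact ⟨i, by simp [hi]⟩
  have hch1 : ∀ j, j ∉ Fr → P j (ch j) := by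
    intro j hj
    have := Finset.min'_mem _ (hnefil j hj)
    simp only [hchdef, dif_pos (hnefil j hj)]
    simpa using this
  have hch2 : ∀ j, j ∉ Fr → ∀ i, i < ch j → ¬ P j i := by
    intro j hj i hi hPi
    have : ch j ≤ i := by
      simp only [hchdef, dif_pos (hnefil j hj)]
      exact Finset.min'_le _ _ (by simp [hPi])
    exact absurd hi (not_lt.mpr this)
  -- charged edges are dominated by their greedy edge
  have hcharged : ∀ j, j ∉ Fr →
      w (g j).1 (g j).2 ≤ w (f (ch j)).1 (f (ch j)).2 := by
    intro j hj
    refine hf.2 (ch j) _ _ (hg.1 j) ?_ ?_ (hch1 j hj)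
    · intro j' hj'
      have h := hch2 j hj j' hj'
      simp only [hPdef, not_or] at h
      exact ⟨h.1, h.2.1⟩
    · intro j' hj'
      have h := hch2 j hj j' hj'
      simp only [hPdef, not_or] at h
      exact ⟨h.2.2.1, h.2.2.2⟩
  -- free edges are dominated by twice any greedy edge
  have hfree2 : ∀ j ∈ Fr, ∀ i, w (g j).1 (g j).2 ≤ 2 * w (f i).1 (f i).2 := by
    intro j hj i
    have hPn : ¬ P j i := (hmemFr j).mp hj i
    simp only [hPdef, not_or] at hPn
    have h1 : w (g j).1 (f i).1 ≤ w (f i).1 (f i).2 := by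
      refine hf.2 i _ _ hPn.1 ?_ (fun j' hj' => hfunc1 i j' hj') (Or.inr (Or.inr (Or.inl rfl)))
      intro j' hj'
      have h := (hmemFr j).mp hj j'
      simp only [hPdef, not_or] at h
      exact ⟨h.1, h.2.1⟩
    have h2 : w (f i).1 (g j).2 ≤ w (f i).1 (f i).2 := by
      refine hf.2 i _ _ (Ne.symm hPn.2.2.1) (fun j' hj' => hfunc1 i j' hj') ?_ (Or.inl rfl)
      intro j' hj'
      have h := (hmemFr j).mp hj j'
      simp only [hPdef, not_or] at h
      exact ⟨h.2.2.1, h.2.2.2⟩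
    have h3 : w (g j).1 (g j).2 ≤ w (g j).1 (f i).1 + w (f i).1 (g j).2 :=
      hmetric _ _ _ (hg.1 j) hPn.2.2.1 hPn.1
    linarith
  -- counting: 2F + 2k ≤ N
  have hcount : 2 * Fr.card + 2 * k ≤ N := by
    set u1 : Finset (Fin N) := Fr.image (fun j => (g j).1) with hu1
    set u2 : Finset (Fin N) := Fr.image (fun j => (g j).2) with hu2
    set c1 : Finset (Fin N) := Finset.univ.image (fun i => (f i).1) with hc1
    set c2 : Finset (Fin N) := Finset.univ.image (fun i => (f i).2) with hc2
    have hu1c : u1.card = Fr.card := Finset.card_image_of_injOn (by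
      intro a _ b _ hab
      by_contra hne
      exact (hg.2 a b hne).1 hab)
    have hu2c : u2.card = Fr.card := Finset.card_image_of_injOn (by
      intro a _ b _ hab
      by_contra hne
      exact (hg.2 a b hne).2.2.2 hab)
    have hc1c : c1.card = k := by
      rw [hc1, Finset.card_image_of_injOn, Finset.card_univ, Fintype.card_fin]
      intro a _ b _ hab
      by_contra hne
      exact (hf.1.2 a b hne).1 hab
    have hc2c : c2.card = k := by
      rw [hc2, Finset.card_image_of_injOn, Finset.card_univ, Fintype.card_fin]
      intro a _ b _ hab
      by_contra hne
      exact (hf.1.2 a b hne).2.2.2 hab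
    have hd12 : Disjoint u1 u2 := by
      rw [Finset.disjoint_left]
      rintro x hx1 hx2
      simp only [hu1, hu2, Finset.mem_image] at hx1 hx2
      obtain ⟨a, _, ha⟩ := hx1
      obtain ⟨b, _, hb⟩ := hx2
      rcases eq_or_ne a b with rfl | hne
      · exact hg.1 a (ha.trans hb.symm)
      · exact (hg.2 a b hne).2.1 (ha.trans hb.symm)
    have hdc12 : Disjoint c1 c2 := by
      rw [Finset.disjoint_left]
      rintro x hx1 hx2
      simp only [hc1, hc2, Finset.mem_image] at hx1 hx2
      obtain ⟨a, _, ha⟩ := hx1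
      obtain ⟨b, _, hb⟩ := hx2
      rcases eq_or_ne a b with rfl | hne
      · exact hf.1.1 a (ha.trans hb.symm)
      · exact (hf.1.2 a b hne).2.1 (ha.trans hb.symm)
    have hduc : Disjoint (u1 ∪ u2) (c1 ∪ c2) := by
      rw [Finset.disjoint_left]
      rintro x hx1 hx2
      simp only [hu1, hu2, hc1, hc2, Finset.mem_union, Finset.mem_image] at hx1 hx2
      have hfree : ∃ j ∈ Fr, x = (g j).1 ∨ x = (g j).2 := by
        rcases hx1 with ⟨a, ha, rfl⟩ | ⟨a, ha, rfl⟩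
        · exact ⟨a, ha, Or.inl rfl⟩
        · exact ⟨a, ha, Or.inr rfl⟩
      obtain ⟨j, hj, hx⟩ := hfree
      have hP : ∀ i, ¬ P j i := (hmemFr j).mp hj
      rcases hx2 with ⟨i, -, hi⟩ | ⟨i, -, hi⟩ <;>
      · have := hP i
        simp only [hPdef, not_or] at this
        rcases hx with rfl | rfl <;> tauto
    have : (u1 ∪ u2 ∪ (c1 ∪ c2)).card = 2 * Fr.card + 2 * k := by
      rw [Finset.card_union_of_disjoint hduc, Finset.card_union_of_disjoint hd12,
        Finset.card_union_of_disjoint hdc12, hu1c, hu2c, hc1c, hc2c]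
      ring
    calc 2 * Fr.card + 2 * k = (u1 ∪ u2 ∪ (c1 ∪ c2)).card := this.symm
      _ ≤ (Finset.univ : Finset (Fin N)).card := Finset.card_le_card (Finset.subset_univ _)
      _ = N := by simp
  -- at most two charged edges per greedy edge
  have hfiber : ∀ i : Fin k, (Frᶜ.filter (fun j => ch j = i)).card ≤ 2 := by
    intro i
    set s := Frᶜ.filter (fun j => ch j = i) with hs
    set φ : Fin kstar → Fin N := fun j =>
      if (g j).1 = (f i).1 ∨ (g j).1 = (f i).2 then (g j).1 else (g j).2 with hφ
    have hmaps : ∀ j ∈ s, φ j ∈ ({(f i).1, (f i).2} : Finset (Fin N)) := by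
      intro j hj
      simp only [hs, Finset.mem_filter, Finset.mem_compl] at hj
      have hP := hch1 j hj.1
      rw [hj.2] at hP
      simp only [hPdef] at hP
      simp only [hφ, Finset.mem_insert, Finset.mem_singleton]
      split
      · next h => exact h
      · next h => push_neg at h; tauto
    have hinj : Set.InjOn φ s := by
      intro a ha b hb hab
      by_contra hne
      have h4 := hg.2 a b hne
      have ha' : φ a = (g a).1 ∨ φ a = (g a).2 := by
        simp only [hφ]; split <;> simp
      have hb' : φ b = (g b).1 ∨ φ b = (g b).2 := by
        simp only [hφ]; split <;> simp
      rcases ha' with h1 | h1 <;> rcases hb' with h2 | h2 <;>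
        rw [h1, h2] at hab <;> tauto
    calc s.card ≤ ({(f i).1, (f i).2} : Finset (Fin N)).card :=
          Finset.card_le_card_of_injOn φ hmaps hinj
      _ ≤ 2 := Finset.card_insert_le _ _ |>.trans (by simp)
  -- minimum greedy edge weight
  have hne : (Finset.univ : Finset (Fin k)).Nonempty := ⟨⟨0, hk⟩, Finset.mem_univ _⟩
  set m : ℝ := Finset.univ.inf' hne (fun i => w (f i).1 (f i).2) with hm
  have hm0 : 0 ≤ m := Finset.le_inf' hne _ (fun i _ => hnonneg _ _)
  have hmle : ∀ i, m ≤ w (f i).1 (f i).2 := fun i => Finset.inf'_le _ (Finset.mem_univ i)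
  have hfreem : ∀ j ∈ Fr, w (g j).1 (g j).2 ≤ 2 * m := by
    intro j hj
    obtain ⟨i0, -, hi0⟩ := Finset.exists_mem_eq_inf' hne (fun i => w (f i).1 (f i).2)
    rw [hm, hi0]
    exact hfree2 j hj i0
  -- the final estimate
  refine ⟨Fr.card, Finset.card_le_card (Finset.subset_univ _) |>.trans (by simp), hcount,
    fun t ht2 htk => ?_⟩
  set n : Fin k → ℕ := fun i => (Frᶜ.filter (fun j => ch j = i)).card with hn
  have hfiber' : ∀ i, n i ≤ 2 := hfiber
  have hCF : Frᶜ.card + Fr.card = kstar := by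
    rw [Finset.card_compl_add_card]; simp
  have hnsum : ∑ i, n i = Frᶜ.card :=
    (Finset.card_eq_sum_card_fiberwise (fun j _ => Finset.mem_univ (ch j))).symm
  have hsplit : mWeight w g = ∑ j ∈ Fr, w (g j).1 (g j).2 + ∑ j ∈ Frᶜ, w (g j).1 (g j).2 :=
    (Finset.sum_add_sum_compl Fr _).symm
  have hSfree : ∑ j ∈ Fr, w (g j).1 (g j).2 ≤ (Fr.card : ℝ) * (2 * m) := by
    have := Finset.sum_le_card_nsmul Fr (fun j => w (g j).1 (g j).2) (2 * m)
      (fun j hj => hfreem j hj)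
    simpa [nsmul_eq_mul] using this
  have hScharged : ∑ j ∈ Frᶜ, w (g j).1 (g j).2 ≤
      ∑ j ∈ Frᶜ, w (f (ch j)).1 (f (ch j)).2 :=
    Finset.sum_le_sum (fun j hj => hcharged j (Finset.mem_compl.mp hj))
  have hfibsum : ∑ j ∈ Frᶜ, w (f (ch j)).1 (f (ch j)).2 =
      ∑ i, (n i : ℝ) * w (f i).1 (f i).2 := by
    rw [← Finset.sum_fiberwise Frᶜ ch (fun j => w (f (ch j)).1 (f (ch j)).2)]
    refine Finset.sum_congr rfl (fun i _ => ?_)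
    rw [Finset.sum_congr rfl (g := fun _ => w (f i).1 (f i).2)
      (fun j hj => by rw [(Finset.mem_filter.mp hj).2]), Finset.sum_const, nsmul_eq_mul]
  clear hn hm hchdef hFrdef hPdef hnefil hmemFr hch1 hch2 hfree2 hfiber hcharged hfreem
  clear_value n m ch Fr P
  have hkey : ∑ i, (n i : ℝ) * w (f i).1 (f i).2 + ∑ i, (t - n i) * m ≤ t * mWeight w f := by
    rw [mWeight, ← Finset.sum_add_distrib, Finset.mul_sum]
    refine Finset.sum_le_sum (fun i _ => ?_)
    have h1 : (n i : ℝ) ≤ 2 := by exact_mod_cast hfiber' i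
    have h0 : (0:ℝ) ≤ t - n i := by linarith
    have h2 : (t - (n i:ℝ)) * m ≤ (t - n i) * w (f i).1 (f i).2 :=
      mul_le_mul_of_nonneg_left (hmle i) h0
    calc (n i : ℝ) * w (f i).1 (f i).2 + (t - n i) * m
        ≤ (n i : ℝ) * w (f i).1 (f i).2 + (t - n i) * w (f i).1 (f i).2 := by linarith
      _ = t * w (f i).1 (f i).2 := by ring
  have hts : ∑ i, (t - (n i : ℝ)) * m = (t * k - Frᶜ.card) * m := by
    have h7 : (∑ i, ((n i : ℝ))) = (Frᶜ.card : ℝ) := by rw [← Nat.cast_sum, hnsum]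
    rw [← Finset.sum_mul, Finset.sum_sub_distrib, h7, Finset.sum_const, Finset.card_univ,
      Fintype.card_fin, nsmul_eq_mul, mul_comm (k : ℝ) t]
  have hCFr : (Frᶜ.card : ℝ) + Fr.card = kstar := by exact_mod_cast hCF
  rw [hsplit]
  have hfin : (Fr.card : ℝ) * (2 * m) ≤ (t * k - Frᶜ.card) * m := by
    have h5 : (2 : ℝ) * Fr.card + Frᶜ.card ≤ t * k := by linarith
    have h6 := mul_le_mul_of_nonneg_right h5 hm0
    nlinarith [h6]
  linarith [hkey, hts.symm, hSfree, hScharged, hfibsum]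

theorem stmt_1 (N : ℕ) (w : Fin N → Fin N → ℝ)
    (hnonneg : ∀ x y, 0 ≤ w x y)
    (hsymm : ∀ x y, w x y = w y x)
    (hmetric : ∀ x y z : Fin N, x ≠ y → y ≠ z → x ≠ z → w x y ≤ w x z + w z y)
    (k kstar : ℕ) (hk : 1 ≤ k)
    (f : Fin k → Fin N × Fin N) (hf : IsGreedySeq w f)
    (g : Fin kstar → Fin N × Fin N) (hg : IsMatching g) :
    (2 * (k : ℝ) / N + 2 * (kstar : ℝ) / N < 1 →
      mWeight w g ≤
        max 2 (2 * (2 * (kstar : ℝ) / N) / (2 * (k : ℝ) / N)) * mWeight w f) ∧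
    (1 ≤ 2 * (k : ℝ) / N + 2 * (kstar : ℝ) / N →
      mWeight w g ≤
        max 2 ((2 * (kstar : ℝ) / N + 1) / (2 * (k : ℝ) / N) - 1) * mWeight w f) := by
  rcases Nat.eq_zero_or_pos N with rfl | hN
  · exact ((f ⟨0, hk⟩).1).elim0
  obtain ⟨F, hFk, hFN, hmain⟩ := key w hnonneg hmetric hk f hf g hg
  have hN' : (0:ℝ) < N := by exact_mod_cast hN
  have hk' : (0:ℝ) < k := by exact_mod_cast hk
  have hFN' : 2*(F:ℝ) + 2*k ≤ N := by exact_mod_cast hFN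
  have hFk' : (F:ℝ) ≤ kstar := by exact_mod_cast hFk
  constructor
  · intro _
    refine hmain _ (le_max_left _ _) ?_
    have h1 : 2 * (2 * (kstar:ℝ) / N) / (2 * (k:ℝ) / N) = 2 * kstar / k := by
      field_simp
    have h2 := le_max_right 2 (2 * (2 * (kstar:ℝ) / N) / (2 * (k:ℝ) / N))
    rw [h1] at h2
    have h3 : (2 * (kstar:ℝ) / k) * k = 2 * kstar := by field_simp
    have h4 := mul_le_mul_of_nonneg_right h2 hk'.le
    rw [h3] at h4
    rw [h1]
    linarith
  · intro _
    refine hmain _ (le_max_left _ _) ?_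
    have h1 : (2 * (kstar:ℝ) / N + 1) / (2 * (k:ℝ) / N) - 1 = (2*kstar + N)/(2*k) - 1 := by
      field_simp
    have h2 := le_max_right 2 ((2 * (kstar:ℝ) / N + 1) / (2 * (k:ℝ) / N) - 1)
    rw [h1] at h2
    have h3 : ((2*(kstar:ℝ) + N)/(2*k) - 1) * k = kstar + N/2 - k := by field_simp
    have h4 := mul_le_mul_of_nonneg_right h2 hk'.le
    rw [h3] at h4
    rw [h1]
    linarith
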